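/- For all positive integers i, all nonnegative integers k, and all real t: Σ_{j=1}^i (-1)^{j-1} C(i,j) j^k t^j = Σ_{j=0}^k S(k,j) t^j (-1)^{j-1} (i)_j (1-t)^{i-j} + [k=0]·(1-(1-t)^i), where (i)_j := i(i-1)⋯(i-j+1) is the falling factorial and S(k,j) are Stirling numbers of the second kind (with the convention that for k ≥ 1 the j=0 term vanishes since S(k,0)=0). -/

import Mathlib

/-- Stirling numbers of the second kind. -/
def stirlingSecond : ℕ → ℕ → ℕ
  | 0, 0 => 1
  | 0, _ + 1 => 0
  | _ + 1, 0 => 0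
  | n + 1, k + 1 => (k + 1) * stirlingSecond n (k + 1) + stirlingSecond n k

lemma stirling_zero_right : ∀ k, 0 < k → stirlingSecond k 0 = 0
  | _+1, _ => rfl

lemma stirling_eq_zero_of_lt : ∀ k m, k < m → stirlingSecond k m = 0
  | 0, _+1, _ => rfl
  | k+1, m+1, h => by
      have h1 : k < m + 1 := by omega
      have h2 : k < m := by omega
      simp [stirlingSecond, stirling_eq_zero_of_lt k (m+1) h1,
        stirling_eq_zero_of_lt k m h2]

lemma mul_descFactorial (j m : ℕ) :
    (j : ℝ) * (j.descFactorial m : ℝ) =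
      (j.descFactorial (m+1) : ℝ) + m * (j.descFactorial m : ℝ) := by
  rcases le_or_gt m j with h | h
  · have : j.descFactorial (m+1) = (j - m) * j.descFactorial m := by
      rw [Nat.descFactorial_succ]
    rw [this]
    push_cast [h]
    ring
  · rw [Nat.descFactorial_eq_zero_iff_lt.2 h,
      Nat.descFactorial_eq_zero_iff_lt.2 (by omega)]
    simp

lemma pow_eq_sum_stirling (k j : ℕ) :
    (j : ℝ) ^ k = ∑ m ∈ Finset.range (k+1),
      (stirlingSecond k m : ℝ) * (j.descFactorial m : ℝ) := by
  induction k with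
  | zero => simp [stirlingSecond]
  | succ k ih =>
    have : (j : ℝ) ^ (k+1) = (j : ℝ) * (j : ℝ) ^ k := by ring
    rw [this, ih, Finset.mul_sum]
    have step : ∀ m ∈ Finset.range (k+1),
        (j:ℝ) * ((stirlingSecond k m : ℝ) * (j.descFactorial m : ℝ)) =
        (stirlingSecond k m : ℝ) * (j.descFactorial (m+1) : ℝ)
          + (m : ℝ) * (stirlingSecond k m : ℝ) * (j.descFactorial m : ℝ) := by
      intro m _
      have := mul_descFactorial j m
      nlinarith [this]
    rw [Finset.sum_congr rfl step, Finset.sum_add_distrib]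
    -- RHS: sum over range (k+2), first term zero
    rw [Finset.sum_range_succ' _ (k+1)]
    have h0 : (stirlingSecond (k+1) 0 : ℝ) * (j.descFactorial 0 : ℝ) = 0 := by
      simp [stirlingSecond]
    rw [h0, add_zero]
    have hrec : ∀ m, (stirlingSecond (k+1) (m+1) : ℝ) =
        (m+1 : ℝ) * stirlingSecond k (m+1) + stirlingSecond k m := by
      intro m; show ((((m+1) * stirlingSecond k (m+1) + stirlingSecond k m : ℕ)) : ℝ) = _
      push_cast; ring
    have expand : ∑ m ∈ Finset.range (k+1),
        (stirlingSecond (k+1) (m+1) : ℝ) * (j.descFactorial (m+1) : ℝ) =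
        ∑ m ∈ Finset.range (k+1), ((stirlingSecond k m : ℝ) * (j.descFactorial (m+1) : ℝ)
          + (m+1 : ℝ) * (stirlingSecond k (m+1) : ℝ) * (j.descFactorial (m+1) : ℝ)) := by
      refine Finset.sum_congr rfl fun m _ => ?_
      rw [hrec]; ring
    rw [expand, Finset.sum_add_distrib]
    congr 1
    -- ∑_{m=0}^{k} m * S(k,m) (j)_m = ∑_{m=0}^{k} (m+1) S(k,m+1) (j)_{m+1}
    rw [Finset.sum_range_succ' (fun m => (m : ℝ) * (stirlingSecond k m : ℝ) * (j.descFactorial m : ℝ)) k]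
    simp only [Nat.cast_zero, zero_mul, add_zero]
    rw [Finset.sum_range_succ]
    have : (stirlingSecond k (k+1) : ℝ) = 0 := by
      rw [stirling_eq_zero_of_lt k (k+1) (by omega)]; simp
    rw [this]
    push_cast
    ring

lemma choose_mul_descFactorial (i j m : ℕ) (h : m ≤ j) :
    i.choose j * j.descFactorial m = i.descFactorial m * (i-m).choose (j-m) := by
  rcases le_or_gt j i with hji | hji
  · rw [Nat.descFactorial_eq_factorial_mul_choose j m,
      Nat.descFactorial_eq_factorial_mul_choose i m,
      ← Nat.mul_assoc, Nat.mul_comm (i.choose j) (Nat.factorial m), Nat.mul_assoc,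
      Nat.choose_mul h, Nat.mul_assoc]
  · rw [Nat.choose_eq_zero_of_lt hji, Nat.zero_mul]
    rcases le_or_gt m i with hmi | hmi
    · rw [Nat.choose_eq_zero_of_lt (by omega), Nat.mul_zero]
    · rw [Nat.descFactorial_eq_zero_iff_lt.2 hmi, Nat.zero_mul]

lemma core (i k : ℕ) (x : ℝ) :
    ∑ j ∈ Finset.range (i+1), (i.choose j : ℝ) * (j : ℝ) ^ k * x ^ j
      = ∑ m ∈ Finset.range (k+1), (stirlingSecond k m : ℝ) * (i.descFactorial m : ℝ)
          * x ^ m * (1+x) ^ (i-m) := by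
  calc ∑ j ∈ Finset.range (i+1), (i.choose j : ℝ) * (j : ℝ) ^ k * x ^ j
      = ∑ j ∈ Finset.range (i+1), ∑ m ∈ Finset.range (k+1),
          (stirlingSecond k m : ℝ) * ((i.choose j : ℝ) * (j.descFactorial m : ℝ) * x ^ j) := by
        refine Finset.sum_congr rfl fun j _ => ?_
        rw [pow_eq_sum_stirling, Finset.mul_sum, Finset.sum_mul]
        refine Finset.sum_congr rfl fun m _ => ?_; ring
    _ = ∑ m ∈ Finset.range (k+1), (stirlingSecond k m : ℝ) *
          ∑ j ∈ Finset.range (i+1), (i.choose j : ℝ) * (j.descFactorial m : ℝ) * x ^ j := by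
        rw [Finset.sum_comm]
        exact Finset.sum_congr rfl fun m _ => by rw [Finset.mul_sum]
    _ = _ := by
        refine Finset.sum_congr rfl fun m hm => ?_
        rw [mul_assoc, mul_assoc]
        congr 1
        rw [← mul_assoc]
        rcases le_or_gt m i with hmi | hmi
        · have hsplit := Finset.sum_range_add_sum_Ico
            (fun j => (i.choose j : ℝ) * (j.descFactorial m : ℝ) * x ^ j)
            (show m ≤ i + 1 by omega)
          have hz : ∑ j ∈ Finset.range m,
              (i.choose j : ℝ) * (j.descFactorial m : ℝ) * x ^ j = 0 := by
            refine Finset.sum_eq_zero fun j hj => ?_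
            have : j.descFactorial m = 0 :=
              Nat.descFactorial_eq_zero_iff_lt.2 (Finset.mem_range.1 hj)
            rw [this]; simp
          rw [← hsplit, hz, zero_add,
            Finset.sum_Ico_eq_sum_range]
          have hlen : i + 1 - m = (i - m) + 1 := by omega
          rw [hlen]
          have hterm : ∀ l, (i.choose (m + l) : ℝ) * ((m + l).descFactorial m : ℝ) * x ^ (m + l)
              = (i.descFactorial m : ℝ) * (((i-m).choose l : ℝ) * (x ^ l * x ^ m)) := by
            intro l
            have := choose_mul_descFactorial i (m + l) m (by omega)
            have hcast : (i.choose (m+l) : ℝ) * ((m+l).descFactorial m : ℝ)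
                = (i.descFactorial m : ℝ) * ((i-m).choose (m+l-m) : ℝ) := by
              exact_mod_cast congrArg (Nat.cast : ℕ → ℝ) this
            have h2 : m + l - m = l := by omega
            rw [h2] at hcast
            rw [hcast, pow_add]
            ring
          rw [Finset.sum_congr rfl (fun l _ => hterm l), ← Finset.mul_sum, mul_assoc]
          congr 1
          have hbin := add_pow x 1 (i-m)
          simp only [one_pow, mul_one] at hbin
          rw [show (1:ℝ)+x = x+1 from by ring, hbin, Finset.mul_sum]
          exact Finset.sum_congr rfl fun l _ => by ring
        · have hz : (i.descFactorial m : ℝ) = 0 := by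
            rw [Nat.descFactorial_eq_zero_iff_lt.2 hmi]; simp
          rw [hz, zero_mul, zero_mul]
          refine Finset.sum_eq_zero fun j hj => ?_
          have : j.descFactorial m = 0 :=
            Nat.descFactorial_eq_zero_iff_lt.2 (by simp at hj; omega)
          rw [this]; simp

theorem alternating_moment_sum_eq (i : ℕ) (hi : 1 ≤ i) (k : ℕ) (t : ℝ) :
    ∑ j ∈ Finset.Icc 1 i, (-1 : ℝ) ^ (j - 1) * (i.choose j : ℝ) * (j : ℝ) ^ k * t ^ j =
      (∑ j ∈ Finset.Icc 1 k, (stirlingSecond k j : ℝ) * t ^ j * (-1 : ℝ) ^ (j - 1) *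
        (i.descFactorial j : ℝ) * (1 - t) ^ (i - j)) +
      (if k = 0 then 1 - (1 - t) ^ i else 0) := by
  have hcore := core i k (-t)
  have h1 : (1 : ℝ) + (-t) = 1 - t := by ring
  rw [h1] at hcore
  have hrange : Finset.range (i+1) = insert 0 (Finset.Icc 1 i) := by
    ext j; simp [Finset.mem_range, Finset.mem_Icc]; omega
  have hrangek : Finset.range (k+1) = insert 0 (Finset.Icc 1 k) := by
    ext j; simp [Finset.mem_range, Finset.mem_Icc]; omega
  rw [hrange, Finset.sum_insert (by simp), hrangek, Finset.sum_insert (by simp)] at hcore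
  have hc0 : (i.choose 0 : ℝ) * ((0:ℕ):ℝ) ^ k * (-t) ^ 0 = (if k = 0 then (1:ℝ) else 0) := by
    cases k <;> simp
  have hs0 : (stirlingSecond k 0 : ℝ) * (i.descFactorial 0 : ℝ) * (-t)^0 * (1-t)^(i-0)
      = (if k = 0 then (1:ℝ) else 0) * (1-t)^i := by
    cases k <;> simp [stirlingSecond]
  rw [hc0, hs0] at hcore
  have hL : ∀ j ∈ Finset.Icc 1 i, (-1 : ℝ) ^ (j - 1) * (i.choose j : ℝ) * (j : ℝ) ^ k * t ^ j
      = -((i.choose j : ℝ) * (j : ℝ) ^ k * (-t) ^ j) := by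
    intro j hj
    have h1j : 1 ≤ j := (Finset.mem_Icc.1 hj).1
    obtain ⟨j', rfl⟩ : ∃ j', j = j' + 1 := ⟨j - 1, by omega⟩
    rw [Nat.add_sub_cancel, neg_pow, pow_succ]
    ring
  have hR : ∀ m ∈ Finset.Icc 1 k, (stirlingSecond k m : ℝ) * t ^ m * (-1 : ℝ) ^ (m - 1) *
        (i.descFactorial m : ℝ) * (1 - t) ^ (i - m)
      = -((stirlingSecond k m : ℝ) * (i.descFactorial m : ℝ) * (-t) ^ m * (1-t) ^ (i-m)) := by
    intro m hm
    have h1m : 1 ≤ m := (Finset.mem_Icc.1 hm).1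
    obtain ⟨m', rfl⟩ : ∃ m', m = m' + 1 := ⟨m - 1, by omega⟩
    rw [Nat.add_sub_cancel, neg_pow, pow_succ]
    ring
  rw [Finset.sum_congr rfl hL, Finset.sum_congr rfl hR, Finset.sum_neg_distrib,
    Finset.sum_neg_distrib]
  rcases eq_or_ne k 0 with hk | hk <;> simp only [hk, if_true, if_false, if_pos, if_neg,
    ite_true, ite_false] at hcore ⊢ <;> simp [hk] at hcore ⊢ <;> linarith
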